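/- Let n ≥ 3 and z : Fin n → Bool. If |z| is even, then G_z is isomorphic (as a simple graph) to the disjoint union (graph sum) of two cycle graphs on n vertices each. -/

import Mathlib

/-- Cyclic successor on `Fin n`. -/
def cycSucc {n : ℕ} (i : Fin n) : Fin n := ⟨(i.val + 1) % n, Nat.mod_lt _ i.pos⟩

/-- The graph `G_z` on the `2n` vertices `Fin n × Fin 2`, where `(i, 0)` is the top vertex
`t_i` and `(i, 1)` is the bottom vertex `b_i`.  For each `i`, if `z i = false` there are
edges `{t_i, t_{i+1}}` and `{b_i, b_{i+1}}`, and if `z i = true` there are edges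
`{t_i, b_{i+1}}` and `{b_i, t_{i+1}}` (indices mod `n`). -/
def Gz (n : ℕ) (z : Fin n → Bool) : SimpleGraph (Fin n × Fin 2) :=
  SimpleGraph.fromEdgeSet { e | ∃ i : Fin n,
    if z i then
      e = s((i, 0), (cycSucc i, 1)) ∨ e = s((i, 1), (cycSucc i, 0))
    else
      e = s((i, 0), (cycSucc i, 0)) ∨ e = s((i, 1), (cycSucc i, 1)) }


/-- The cycle graph on `m` vertices: `v` and `w` are adjacent iff they differ by `±1` mod `m`. -/
def cycleGraph (m : ℕ) : SimpleGraph (Fin m) :=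
  SimpleGraph.fromRel fun v w => cycSucc v = w

namespace GzAux

variable {n : ℕ}

open Fin.NatCast

lemma cycSucc_ne (hn : 2 ≤ n) (i : Fin n) : cycSucc i ≠ i := by
  intro h
  have hv : (i.val + 1) % n = i.val := congrArg Fin.val h
  have hlt : i.val < n := i.isLt
  rcases Nat.lt_or_ge (i.val + 1) n with h1 | h1
  · rw [Nat.mod_eq_of_lt h1] at hv; omega
  · have hvn : i.val + 1 = n := by omega
    rw [hvn, Nat.mod_self] at hv
    omega

/-- number of `true`s among indices `< k`. -/
def cnt (z : Fin n → Bool) (k : ℕ) : ℕ :=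
  ((Finset.range k).filter fun m => ∃ h : m < n, z ⟨m, h⟩ = true).card

lemma cnt_succ (z : Fin n → Bool) (i : Fin n) :
    cnt z (i.val + 1) = cnt z i.val + (if z i then 1 else 0) := by
  unfold cnt
  rw [Finset.range_add_one, Finset.filter_insert]
  have hi : (∃ h : i.val < n, z ⟨i.val, h⟩ = true) ↔ z i = true := by
    constructor
    · rintro ⟨h, hz⟩; simpa using hz
    · intro hz; exact ⟨i.isLt, by simpa using hz⟩
  by_cases hz : z i = true
  · rw [if_pos (hi.mpr hz), Finset.card_insert_of_notMem (by simp), if_pos hz]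
  · rw [if_neg (fun hc => hz (hi.mp hc)), if_neg hz]
    simp

lemma cnt_n (z : Fin n → Bool) :
    cnt z n = (Finset.univ.filter fun i => z i = true).card := by
  unfold cnt
  rw [← Finset.card_image_of_injective (Finset.univ.filter fun i => z i = true)
    Fin.val_injective]
  congr 1
  ext m
  simp only [Finset.mem_filter, Finset.mem_range, Finset.mem_image, Finset.mem_univ, true_and]
  constructor
  · rintro ⟨hm, h1, h2⟩; exact ⟨⟨m, h1⟩, h2, rfl⟩
  · rintro ⟨i, hz, rfl⟩; exact ⟨i.isLt, i.isLt, by simpa using hz⟩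

lemma even_cast_fin2 {m : ℕ} (hm : Even m) : (m : Fin 2) = 0 := by
  have h2 : m % 2 = 0 := Nat.even_iff.mp hm
  apply Fin.ext
  rw [Fin.val_natCast]
  simpa using h2

/-- parity of the number of `true`s before index `i`. -/
def par (z : Fin n → Bool) (i : Fin n) : Fin 2 := (cnt z i.val : Fin 2)

lemma par_cycSucc (z : Fin n → Bool)
    (h : Even (Finset.univ.filter fun i => z i = true).card) (i : Fin n) :
    par z (cycSucc i) = par z i + (if z i then 1 else 0) := by
  have hcast : ((if z i then 1 else 0 : ℕ) : Fin 2) = (if z i then 1 else 0 : Fin 2) := by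
    split <;> simp
  rcases Nat.lt_or_ge (i.val + 1) n with h1 | h1
  · have hv : (cycSucc i).val = i.val + 1 := Nat.mod_eq_of_lt h1
    unfold par
    rw [hv, cnt_succ, Nat.cast_add, hcast]
  · have hvn : i.val + 1 = n := by have := i.isLt; omega
    have hv : (cycSucc i).val = 0 := by
      show (i.val + 1) % n = 0
      rw [hvn, Nat.mod_self]
    have hz : ((cnt z n : ℕ) : Fin 2) = 0 := by
      rw [cnt_n]; exact even_cast_fin2 h
    unfold par
    rw [hv]
    have : cnt z 0 = 0 := by simp [cnt]
    rw [this]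
    have hsum : cnt z n = cnt z i.val + (if z i then 1 else 0) := by
      have := cnt_succ z i
      rwa [hvn] at this
    rw [hsum, Nat.cast_add, hcast] at hz
    simpa using hz.symm

lemma Gz_adj_iff (hn : 2 ≤ n) (z : Fin n → Bool) (i j : Fin n) (a b : Fin 2) :
    (Gz n z).Adj (i, a) (j, b) ↔
      ((j = cycSucc i ∧ b = a + (if z i then 1 else 0)) ∨
       (i = cycSucc j ∧ a = b + (if z j then 1 else 0))) := by
  rw [Gz, SimpleGraph.fromEdgeSet_adj]
  constructor
  · rintro ⟨⟨k, hk⟩, hne⟩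
    by_cases hzk : z k = true <;>
      simp only [hzk, if_true, if_false, Sym2.eq_iff, Prod.mk.injEq] at hk <;>
      rcases hk with (⟨⟨h1, h2⟩, h3, h4⟩ | ⟨⟨h1, h2⟩, h3, h4⟩) | (⟨⟨h1, h2⟩, h3, h4⟩ | ⟨⟨h1, h2⟩, h3, h4⟩) <;>
      subst h1 <;> subst h2 <;> subst h3 <;> subst h4 <;>
      simp [hzk]
  · have hFin : ∀ c : Fin 2, c = 0 ∨ c = 1 := by decide
    rintro (⟨rfl, rfl⟩ | ⟨rfl, rfl⟩)
    · refine ⟨⟨i, ?_⟩, ?_⟩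
      · by_cases hzi : z i = true <;> rcases hFin a with rfl | rfl <;> simp [hzi]
      · intro hc
        exact cycSucc_ne hn i (congrArg Prod.fst hc).symm
    · refine ⟨⟨j, ?_⟩, ?_⟩
      · by_cases hzj : z j = true <;> rcases hFin b with rfl | rfl <;> simp [hzj]
      · intro hc
        exact cycSucc_ne hn j (congrArg Prod.fst hc)

end GzAux

theorem Gz_iso_two_cycles_of_even (n : ℕ) (hn : 3 ≤ n) (z : Fin n → Bool)
    (h : Even (Finset.univ.filter fun i => z i = true).card) :
    Nonempty (Gz n z ≃g (cycleGraph n ⊕g cycleGraph n)) := by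
  have hn2 : 2 ≤ n := by omega
  classical
  set p : Fin n → Fin 2 := GzAux.par z with hp
  have key : ∀ i : Fin n, p (cycSucc i) = p i + (if z i then 1 else 0) :=
    GzAux.par_cycSucc z h
  have hne1 : ∀ c : Fin 2, c + 1 ≠ c := by decide
  have heq1 : ∀ c d : Fin 2, c ≠ d → c = d + 1 := by decide
  have habs : ∀ c d : Fin 2, c + d ≠ c + 1 + d := by decide
  have hcomm : ∀ c d : Fin 2, c + d + 1 = c + 1 + d := by decide
  let f : Fin n × Fin 2 → Fin n ⊕ Fin n :=
    fun x => if x.2 = p x.1 then Sum.inl x.1 else Sum.inr x.1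
  let g : Fin n ⊕ Fin n → Fin n × Fin 2 :=
    fun s => match s with
      | Sum.inl i => (i, p i)
      | Sum.inr i => (i, p i + 1)
  have hleft : Function.LeftInverse g f := by
    rintro ⟨i, a⟩
    by_cases ha : a = p i
    · simp [f, g, ha]
    · simp only [f, g, if_neg ha]
      exact Prod.ext rfl (heq1 a (p i) ha).symm
  have hright : Function.RightInverse g f := by
    rintro (i | i)
    · simp [f, g]
    · simp [f, g, hne1 (p i)]
  refine ⟨⟨⟨f, g, hleft, hright⟩, ?_⟩⟩
  rintro ⟨i, a⟩ ⟨j, b⟩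
  show (cycleGraph n ⊕g cycleGraph n).Adj (f (i, a)) (f (j, b)) ↔ _
  rw [GzAux.Gz_adj_iff hn2 z i j a b]
  have hcyc : ∀ v w : Fin n, (cycleGraph n).Adj v w ↔
      v ≠ w ∧ (cycSucc v = w ∨ cycSucc w = v) := by
    intro v w
    rw [cycleGraph, SimpleGraph.fromRel_adj]
  by_cases ha : a = p i <;> by_cases hb : b = p j
  · simp only [f, if_pos ha, if_pos hb]
    show (cycleGraph n).Adj i j ↔ _
    rw [hcyc]
    constructor
    · rintro ⟨hne, h1 | h1⟩
      · exact Or.inl ⟨h1.symm, by rw [hb, ha, ← h1, key i]⟩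
      · exact Or.inr ⟨h1.symm, by rw [hb, ha, ← h1, key j]⟩
    · rintro (⟨rfl, _⟩ | ⟨rfl, _⟩)
      · exact ⟨fun hc => GzAux.cycSucc_ne hn2 i hc.symm, Or.inl rfl⟩
      · exact ⟨fun hc => GzAux.cycSucc_ne hn2 j hc, Or.inr rfl⟩
  · have hb' : b = p j + 1 := heq1 b (p j) hb
    simp only [f, if_pos ha, if_neg hb]
    show (false = true) ↔ _
    simp only [Bool.false_eq_true, false_iff]
    rintro (⟨rfl, hE⟩ | ⟨rfl, hE⟩)
    · rw [hb', ha, key i] at hE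
      exact hne1 _ hE
    · rw [ha] at hE
      rw [key j, hb'] at hE
      exact habs _ _ hE
  · have ha' : a = p i + 1 := heq1 a (p i) ha
    simp only [f, if_neg ha, if_pos hb]
    show (false = true) ↔ _
    simp only [Bool.false_eq_true, false_iff]
    rintro (⟨rfl, hE⟩ | ⟨rfl, hE⟩)
    · rw [hb] at hE
      rw [key i, ha'] at hE
      exact habs _ _ hE
    · rw [ha', hb, key j] at hE
      exact hne1 _ hE
  · have ha' : a = p i + 1 := heq1 a (p i) ha
    have hb' : b = p j + 1 := heq1 b (p j) hb
    simp only [f, if_neg ha, if_neg hb]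
    show (cycleGraph n).Adj i j ↔ _
    rw [hcyc]
    constructor
    · rintro ⟨hne, h1 | h1⟩
      · refine Or.inl ⟨h1.symm, ?_⟩
        rw [hb', ha', ← h1, key i]
        exact hcomm _ _
      · refine Or.inr ⟨h1.symm, ?_⟩
        rw [hb', ha', ← h1, key j]
        exact hcomm _ _
    · rintro (⟨rfl, _⟩ | ⟨rfl, _⟩)
      · exact ⟨fun hc => GzAux.cycSucc_ne hn2 i hc.symm, Or.inl rfl⟩
      · exact ⟨fun hc => GzAux.cycSucc_ne hn2 j hc, Or.inr rfl⟩
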